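/- Let C be a binary linear code of length n whose extended code C_ex is transitive invariant. For odd w, L_w(C) = ((w+1)/(n+1)) · L_{w+1}(C_ex). -/
import Mathlib


open Finset

/-- Support of a binary vector: the set of nonzero coordinates. -/
def supp {n : ℕ} (v : Fin n → ZMod 2) : Finset (Fin n) :=
  Finset.univ.filter fun i => v i ≠ 0

/-- Hamming weight. -/
def wt {n : ℕ} (v : Fin n → ZMod 2) : ℕ := (supp v).card

/-- A nonzero codeword of `D` is a zero neighbor (minimal codeword) if no nonzero
codeword of `D` has support strictly contained in its support. -/
def IsZeroNeighbor {n : ℕ} (D : Set (Fin n → ZMod 2)) (v : Fin n → ZMod 2) : Prop :=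
  v ∈ D ∧ v ≠ 0 ∧ ∀ v' ∈ D, v' ≠ 0 → ¬ supp v' ⊂ supp v

/-- `v` is decomposable in `D` if it is the sum of two nonzero codewords of `D`
with disjoint supports. -/
def Decomposable {n : ℕ} (D : Set (Fin n → ZMod 2)) (v : Fin n → ZMod 2) : Prop :=
  ∃ v1 v2, v1 ∈ D ∧ v2 ∈ D ∧ v1 ≠ 0 ∧ v2 ≠ 0 ∧
    Disjoint (supp v1) (supp v2) ∧ v = v1 + v2

/-- Extension of a vector by its overall parity bit. -/
def extVec {n : ℕ} (v : Fin n → ZMod 2) : Fin (n + 1) → ZMod 2 :=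
  Fin.snoc v (∑ i, v i)

/-- The extended code. -/
def extCode {n : ℕ} (C : Submodule (ZMod 2) (Fin n → ZMod 2)) :
    Set (Fin (n + 1) → ZMod 2) :=
  extVec '' (C : Set (Fin n → ZMod 2))

/-- An even-weight codeword is only-odd-decomposable if it is decomposable and in every
decomposition into nonzero disjoint-support codewords both parts have odd weight. -/
def OnlyOddDecomposable {n : ℕ} (C : Submodule (ZMod 2) (Fin n → ZMod 2))
    (v : Fin n → ZMod 2) : Prop :=
  Even (wt v) ∧ Decomposable (C : Set (Fin n → ZMod 2)) v ∧
    ∀ v1 v2, v1 ∈ C → v2 ∈ C → v1 ≠ 0 → v2 ≠ 0 →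
      Disjoint (supp v1) (supp v2) → v = v1 + v2 → Odd (wt v1) ∧ Odd (wt v2)

/-- `L_w(D)`: the number of zero neighbors of weight `w` in `D`. -/
noncomputable def Lw {n : ℕ} (D : Set (Fin n → ZMod 2)) (w : ℕ) : ℕ :=
  {v : Fin n → ZMod 2 | IsZeroNeighbor D v ∧ wt v = w}.ncard

/-- `N_w(C)`: the number of only-odd-decomposable codewords of weight `w` in `C`. -/
noncomputable def Nw {n : ℕ} (C : Submodule (ZMod 2) (Fin n → ZMod 2)) (w : ℕ) : ℕ :=
  {v : Fin n → ZMod 2 | v ∈ C ∧ OnlyOddDecomposable C v ∧ wt v = w}.ncard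

/-- Action of a coordinate permutation on a vector. -/
def permVec {n : ℕ} (π : Equiv.Perm (Fin n)) (v : Fin n → ZMod 2) : Fin n → ZMod 2 :=
  v ∘ π.symm

/-- `π` is an automorphism of the code `D`. -/
def IsAut {n : ℕ} (D : Set (Fin n → ZMod 2)) (π : Equiv.Perm (Fin n)) : Prop :=
  permVec π '' D = D

/-- The even weight subcode of `C`, as a set. -/
def evenSub {n : ℕ} (C : Submodule (ZMod 2) (Fin n → ZMod 2)) :
    Set (Fin n → ZMod 2) :=
  {v : Fin n → ZMod 2 | v ∈ C ∧ Even (wt v)}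


section AuxLemmas

open Finset

variable {n : ℕ}

lemma zmod2_ne_zero {x : ZMod 2} (h : x ≠ 0) : x = 1 := by
  revert h; revert x; decide

lemma mem_supp {v : Fin n → ZMod 2} {i : Fin n} : i ∈ supp v ↔ v i ≠ 0 := by
  simp [supp]

lemma eq_of_supp_eq {v v' : Fin n → ZMod 2} (h : supp v = supp v') : v = v' := by
  funext i
  by_cases h1 : v i = 0 <;> by_cases h2 : v' i = 0
  · rw [h1, h2]
  · exact absurd (mem_supp.1 (h ▸ mem_supp.2 h2)) (by simpa using h1)
  · exact absurd (mem_supp.1 (h.symm ▸ mem_supp.2 h1)) (by simpa using h2)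
  · rw [zmod2_ne_zero h1, zmod2_ne_zero h2]

lemma sum_eq_wt (v : Fin n → ZMod 2) : (∑ i, v i) = (wt v : ZMod 2) := by
  classical
  rw [wt, supp]
  rw [← Finset.sum_filter_ne_zero Finset.univ (f := v)]
  rw [Finset.sum_congr rfl (fun i hi => zmod2_ne_zero (by simpa [supp] using (Finset.mem_filter.1 hi).2))]
  simp

lemma natCast_zmod2_eq_zero_iff (k : ℕ) : (k : ZMod 2) = 0 ↔ Even k := by
  rw [ZMod.natCast_eq_zero_iff]
  exact even_iff_two_dvd.symm

lemma extVec_castSucc (v : Fin n → ZMod 2) (i : Fin n) : extVec v i.castSucc = v i := by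
  simp [extVec]

lemma extVec_last (v : Fin n → ZMod 2) : extVec v (Fin.last n) = (wt v : ZMod 2) := by
  simp [extVec, sum_eq_wt]

lemma extVec_injective : Function.Injective (extVec (n := n)) := by
  intro v v' h; funext i
  have := congrFun h i.castSucc
  rwa [extVec_castSucc, extVec_castSucc] at this

lemma wt_zero : wt (0 : Fin n → ZMod 2) = 0 := by
  simp [wt, supp]

lemma extVec_zero : extVec (0 : Fin n → ZMod 2) = 0 := by
  funext j
  rcases Fin.eq_castSucc_or_eq_last j with ⟨i, rfl⟩ | rfl
  · simp [extVec_castSucc]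
  · simp [extVec_last, wt_zero]

lemma extVec_ne_zero {v : Fin n → ZMod 2} (h : v ≠ 0) : extVec v ≠ 0 := by
  intro h0; exact h (extVec_injective (h0.trans extVec_zero.symm))

lemma castSucc_mem_supp_ext {v : Fin n → ZMod 2} {i : Fin n} :
    i.castSucc ∈ supp (extVec v) ↔ i ∈ supp v := by
  rw [mem_supp, mem_supp, extVec_castSucc]

lemma last_mem_supp_ext {v : Fin n → ZMod 2} :
    Fin.last n ∈ supp (extVec v) ↔ Odd (wt v) := by
  rw [mem_supp, extVec_last, Ne, natCast_zmod2_eq_zero_iff, Nat.not_even_iff_odd]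

lemma supp_ext_mono {v v' : Fin n → ZMod 2} (hv : Odd (wt v)) (h : supp v' ⊆ supp v) :
    supp (extVec v') ⊆ supp (extVec v) := by
  intro j hj
  rcases Fin.eq_castSucc_or_eq_last j with ⟨i, rfl⟩ | rfl
  · exact castSucc_mem_supp_ext.2 (h (castSucc_mem_supp_ext.1 hj))
  · exact last_mem_supp_ext.2 hv

lemma supp_restrict {v v' : Fin n → ZMod 2}
    (h : supp (extVec v') ⊆ supp (extVec v)) : supp v' ⊆ supp v := by
  intro i hi
  exact castSucc_mem_supp_ext.1 (h (castSucc_mem_supp_ext.2 hi))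

lemma supp_ext_ssubset {v v' : Fin n → ZMod 2} (hv : Odd (wt v))
    (h : supp v' ⊂ supp v) : supp (extVec v') ⊂ supp (extVec v) := by
  rw [Finset.ssubset_def]
  refine ⟨supp_ext_mono hv h.subset, fun hc => ?_⟩
  exact (Finset.ssubset_def.1 h).2 (supp_restrict hc)

lemma wt_extVec_odd {v : Fin n → ZMod 2} (hv : Odd (wt v)) : wt (extVec v) = wt v + 1 := by
  classical
  have h1 : extVec v (Fin.last n) ≠ 0 := by
    rw [extVec_last, Ne, natCast_zmod2_eq_zero_iff, Nat.not_even_iff_odd]; exact hv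
  rw [wt, wt, supp, supp, Finset.card_filter, Finset.card_filter,
    Fin.sum_univ_castSucc, if_pos h1]
  simp only [extVec_castSucc]

lemma zn_ext_iff {C : Submodule (ZMod 2) (Fin n → ZMod 2)} {v : Fin n → ZMod 2}
    (hodd : Odd (wt v)) :
    IsZeroNeighbor (C : Set (Fin n → ZMod 2)) v ↔ IsZeroNeighbor (extCode C) (extVec v) := by
  constructor
  · rintro ⟨hmem, hne, hmin⟩
    refine ⟨⟨v, hmem, rfl⟩, extVec_ne_zero hne, ?_⟩
    rintro u' ⟨v', hv', rfl⟩ hne' hss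
    have hvne' : v' ≠ 0 := by rintro rfl; exact hne' extVec_zero
    have hsub : supp v' ⊆ supp v := supp_restrict hss.subset
    rcases eq_or_ne (supp v') (supp v) with he | hne2
    · have : v' = v := eq_of_supp_eq he
      subst this
      exact (ssubset_irrefl _) hss
    · exact hmin v' hv' hvne'
        (Finset.ssubset_def.2 ⟨hsub, fun hc => hne2 (Finset.Subset.antisymm hsub hc)⟩)
  · rintro ⟨hmem, hne, hmin⟩
    obtain ⟨v'', hv'', he⟩ := hmem
    have hveq : v'' = v := extVec_injective he
    subst hveq
    refine ⟨hv'', ?_, ?_⟩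
    · rintro rfl; exact hne extVec_zero
    · intro v' hv' hne' hss
      exact hmin (extVec v') ⟨v', hv', rfl⟩ (extVec_ne_zero hne') (supp_ext_ssubset hodd hss)

lemma permVec_permVec (π : Equiv.Perm (Fin n)) (u : Fin n → ZMod 2) :
    permVec π.symm (permVec π u) = u := by
  funext j; simp [permVec]

lemma permVec_permVec' (π : Equiv.Perm (Fin n)) (u : Fin n → ZMod 2) :
    permVec π (permVec π.symm u) = u := by
  funext j; simp [permVec]

lemma permVec_injective (π : Equiv.Perm (Fin n)) : Function.Injective (permVec π) := by
  intro a b h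
  rw [← permVec_permVec π a, h, permVec_permVec]

lemma supp_permVec (π : Equiv.Perm (Fin n)) (u : Fin n → ZMod 2) :
    supp (permVec π u) = (supp u).map π.toEmbedding := by
  ext j
  rw [mem_supp, Finset.mem_map_equiv, mem_supp]
  rfl

lemma wt_permVec (π : Equiv.Perm (Fin n)) (u : Fin n → ZMod 2) :
    wt (permVec π u) = wt u := by
  rw [wt, wt, supp_permVec, Finset.card_map]

lemma map_ssubset_map_iff {α β : Type*} {f : α ↪ β} {s t : Finset α} :
    s.map f ⊂ t.map f ↔ s ⊂ t := by
  simp [Finset.ssubset_def, Finset.map_subset_map]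

lemma isAut_symm {D : Set (Fin n → ZMod 2)} {π : Equiv.Perm (Fin n)} (h : IsAut D π) :
    IsAut D π.symm := by
  unfold IsAut at *
  conv_lhs => rw [← h]
  rw [← Set.image_comp]
  have he : permVec π.symm ∘ permVec π = id := by funext u; exact permVec_permVec π u
  rw [he, Set.image_id]

lemma zn_permVec {D : Set (Fin n → ZMod 2)} {π : Equiv.Perm (Fin n)} (h : IsAut D π)
    {u : Fin n → ZMod 2} (hu : IsZeroNeighbor D u) : IsZeroNeighbor D (permVec π u) := by
  obtain ⟨hmem, hne, hmin⟩ := hu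
  refine ⟨?_, ?_, ?_⟩
  · rw [← h]; exact ⟨u, hmem, rfl⟩
  · intro h0
    apply hne
    rw [← permVec_permVec π u, h0]
    funext j; simp [permVec]
  · intro u' hu' hne' hss
    have hmem'' : permVec π.symm u' ∈ D := by
      rw [← isAut_symm h]; exact ⟨u', hu', rfl⟩
    have hne'' : permVec π.symm u' ≠ 0 := by
      intro h0
      apply hne'
      rw [← permVec_permVec' π u', h0]
      funext j; simp [permVec]
    refine hmin (permVec π.symm u') hmem'' hne'' ?_
    have e1 : (supp (permVec π.symm u')).map π.toEmbedding = supp u' := by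
      rw [← supp_permVec, permVec_permVec']
    rw [← e1, supp_permVec π u] at hss
    exact map_ssubset_map_iff.1 hss

lemma ncard_setOf_eq_card_filter {α : Type*} [Fintype α] (p : α → Prop) [DecidablePred p] :
    {x | p x}.ncard = (Finset.univ.filter p).card := by
  rw [← Set.ncard_coe_finset]
  congr 1
  ext x; simp

end AuxLemmas

theorem lwd_odd_from_extended {n : ℕ}
    (C : Submodule (ZMod 2) (Fin n → ZMod 2))
    (htrans : ∀ i j : Fin (n + 1), ∃ π : Equiv.Perm (Fin (n + 1)),
      IsAut (extCode C) π ∧ π i = j)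
    (w : ℕ) (hw : Odd w) :
    (Lw (C : Set (Fin n → ZMod 2)) w : ℚ) =
      (((w : ℚ) + 1) / (n + 1)) * Lw (extCode C) (w + 1) := by
  classical
  set P : (Fin (n + 1) → ZMod 2) → Prop :=
    fun u => IsZeroNeighbor (extCode C) u ∧ wt u = w + 1 with hP
  -- Step A: bijection via extVec
  have hA : extVec '' {v : Fin n → ZMod 2 | IsZeroNeighbor (C : Set (Fin n → ZMod 2)) v ∧ wt v = w}
      = {u : Fin (n + 1) → ZMod 2 | P u ∧ u (Fin.last n) ≠ 0} := by
    ext u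
    constructor
    · rintro ⟨v, ⟨hzn, hwt⟩, rfl⟩
      have hodd : Odd (wt v) := hwt ▸ hw
      refine ⟨⟨(zn_ext_iff hodd).1 hzn, by rw [wt_extVec_odd hodd, hwt]⟩, ?_⟩
      rw [extVec_last, Ne, natCast_zmod2_eq_zero_iff, Nat.not_even_iff_odd]
      exact hodd
    · rintro ⟨⟨hzn, hwt⟩, hlast⟩
      obtain ⟨v, hv, rfl⟩ := hzn.1
      have hodd : Odd (wt v) := by
        rw [extVec_last, Ne, natCast_zmod2_eq_zero_iff, Nat.not_even_iff_odd] at hlast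
        exact hlast
      have hwv : wt v = w := by
        have := wt_extVec_odd hodd
        omega
      exact ⟨v, ⟨(zn_ext_iff hodd).2 hzn, hwv⟩, rfl⟩
  have hLwC : Lw (C : Set (Fin n → ZMod 2)) w
      = (Finset.univ.filter fun u => P u ∧ u (Fin.last n) ≠ 0).card := by
    rw [Lw, ← Set.ncard_image_of_injective _ extVec_injective, hA,
      ncard_setOf_eq_card_filter]
  have hLwD : Lw (extCode C) (w + 1) = (Finset.univ.filter P).card := by
    rw [Lw, ncard_setOf_eq_card_filter]
  -- Step B: all coordinate counts are equal (transitivity)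
  have hcardEq : ∀ i : Fin (n + 1),
      (Finset.univ.filter fun u => P u ∧ u i ≠ 0).card
        = (Finset.univ.filter fun u => P u ∧ u (Fin.last n) ≠ 0).card := by
    intro i
    obtain ⟨π, haut, hpi⟩ := htrans i (Fin.last n)
    have himg : permVec π '' {u | P u ∧ u i ≠ 0} = {u | P u ∧ u (Fin.last n) ≠ 0} := by
      ext u'
      constructor
      · rintro ⟨u, ⟨⟨hzn, hwt⟩, hui⟩, rfl⟩
        refine ⟨⟨zn_permVec haut hzn, by rwa [wt_permVec]⟩, ?_⟩
        show u (π.symm (Fin.last n)) ≠ 0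
        rw [← hpi, Equiv.symm_apply_apply]
        exact hui
      · rintro ⟨⟨hzn, hwt⟩, hlast⟩
        refine ⟨permVec π.symm u', ⟨⟨zn_permVec (isAut_symm haut) hzn,
          by rwa [wt_permVec]⟩, ?_⟩, permVec_permVec' π u'⟩
        show u' (π.symm.symm i) ≠ 0
        rw [Equiv.symm_symm, hpi]
        exact hlast
    have h1 : {u : Fin (n + 1) → ZMod 2 | P u ∧ u i ≠ 0}.ncard
        = {u : Fin (n + 1) → ZMod 2 | P u ∧ u (Fin.last n) ≠ 0}.ncard := by
      rw [← himg, Set.ncard_image_of_injective _ (permVec_injective π)]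
    rwa [ncard_setOf_eq_card_filter, ncard_setOf_eq_card_filter] at h1
  -- Step C: double counting
  have hsum : ∑ i : Fin (n + 1), (Finset.univ.filter fun u => P u ∧ u i ≠ 0).card
      = (w + 1) * (Finset.univ.filter P).card := by
    have h1 : ∀ i : Fin (n + 1), (Finset.univ.filter fun u => P u ∧ u i ≠ 0)
        = (Finset.univ.filter P).filter (fun u => u i ≠ 0) := by
      intro i
      rw [Finset.filter_filter]
    calc ∑ i : Fin (n + 1), (Finset.univ.filter fun u => P u ∧ u i ≠ 0).card
        = ∑ i : Fin (n + 1), ∑ u ∈ Finset.univ.filter P, if u i ≠ 0 then 1 else 0 := by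
          refine Finset.sum_congr rfl fun i _ => ?_
          rw [h1 i, Finset.card_filter]
      _ = ∑ u ∈ Finset.univ.filter P, ∑ i : Fin (n + 1), if u i ≠ 0 then 1 else 0 :=
          Finset.sum_comm
      _ = ∑ u ∈ Finset.univ.filter P, wt u := by
          refine Finset.sum_congr rfl fun u _ => ?_
          rw [wt, supp, Finset.card_filter]
      _ = ∑ u ∈ Finset.univ.filter P, (w + 1) := by
          refine Finset.sum_congr rfl fun u hu => ?_
          exact (Finset.mem_filter.1 hu).2.2
      _ = (w + 1) * (Finset.univ.filter P).card := by
          rw [Finset.sum_const, smul_eq_mul, mul_comm]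
  have hsum2 : ∑ i : Fin (n + 1), (Finset.univ.filter fun u => P u ∧ u i ≠ 0).card
      = (n + 1) * Lw (C : Set (Fin n → ZMod 2)) w := by
    rw [Finset.sum_congr rfl fun i _ => hcardEq i, Finset.sum_const, smul_eq_mul,
      Finset.card_univ, Fintype.card_fin, hLwC]
  have hnat : (n + 1) * Lw (C : Set (Fin n → ZMod 2)) w
      = (w + 1) * Lw (extCode C) (w + 1) := by
    rw [hLwD, ← hsum, ← hsum2]
  have hq : ((n : ℚ) + 1) * (Lw (C : Set (Fin n → ZMod 2)) w : ℚ)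
      = ((w : ℚ) + 1) * (Lw (extCode C) (w + 1) : ℚ) := by
    exact_mod_cast congrArg (Nat.cast : ℕ → ℚ) hnat
  have hn1 : ((n : ℚ) + 1) ≠ 0 := by positivity
  field_simp
  linarith [hq]
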